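/- Let V_1, V_2, … be i.i.d. random vectors in ℝ^{d+1} with ‖V_i‖ ≤ K, and let W_q, W_v be matrices with operator norm at most 1, v a fixed vector with ‖v‖ ≤ K. Define u'_n = (Σ_{j=1}^n exp(v^T W_q V_j) W_v V_j) / (Σ_{j=1}^n exp(v^T W_q V_j)). Then u'_n → W_v E_{g}[V] almost surely as n → ∞, where g is the exponentially tilted measure dg(s) = exp(v^T W_q s) dP(s) / E_P[exp(v^T W_q V)]. -/

import Mathlib

open MeasureTheory ProbabilityTheory Filter RealInnerProductSpace

/-- The attention numerator/denominator averages converge almost surely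
to the mean of `W_v V` under the exponentially tilted measure
`dg(s) ∝ exp(⟪v, W_q s⟫) dP(s)`. -/
theorem attention_lln_exponential_tilt
    {Ω : Type*} [MeasurableSpace Ω] (μ : Measure Ω) [IsProbabilityMeasure μ]
    (d : ℕ)
    (P : Measure (EuclideanSpace ℝ (Fin (d + 1)))) [IsProbabilityMeasure P]
    (V : ℕ → Ω → EuclideanSpace ℝ (Fin (d + 1)))
    (hVmeas : ∀ i, Measurable (V i))
    (hVindep : iIndepFun V μ)
    (hVlaw : ∀ i, Measure.map (V i) μ = P)
    (K : ℝ) (hVbd : ∀ i ω, ‖V i ω‖ ≤ K)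
    (Wq Wv : EuclideanSpace ℝ (Fin (d + 1)) →L[ℝ] EuclideanSpace ℝ (Fin (d + 1)))
    (hWq : ‖Wq‖ ≤ 1) (hWv : ‖Wv‖ ≤ 1)
    (v : EuclideanSpace ℝ (Fin (d + 1))) (hv : ‖v‖ ≤ K) :
    ∀ᵐ ω ∂μ, Tendsto
      (fun n : ℕ =>
        (∑ j ∈ Finset.range n, Real.exp ⟪v, Wq (V j ω)⟫)⁻¹ •
          ∑ j ∈ Finset.range n, Real.exp ⟪v, Wq (V j ω)⟫ • Wv (V j ω))
      atTop
      (nhds (Wv ((∫ s, Real.exp ⟪v, Wq s⟫ ∂P)⁻¹ •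
        ∫ s, Real.exp ⟪v, Wq s⟫ • s ∂P))) := by
  classical
  have hΩ : Nonempty Ω := by
    by_contra h
    rw [not_nonempty_iff] at h
    have h1 : (1 : ENNReal) = 0 := by
      rw [← measure_univ (μ := μ), Set.eq_empty_of_isEmpty (Set.univ : Set Ω), measure_empty]
    exact one_ne_zero h1
  set F : EuclideanSpace ℝ (Fin (d + 1)) → ℝ := fun s => Real.exp ⟪v, Wq s⟫ with hF
  set G : EuclideanSpace ℝ (Fin (d + 1)) → EuclideanSpace ℝ (Fin (d + 1)) := fun s => Real.exp ⟪v, Wq s⟫ • Wv s with hG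
  set H : EuclideanSpace ℝ (Fin (d + 1)) → EuclideanSpace ℝ (Fin (d + 1)) := fun s => Real.exp ⟪v, Wq s⟫ • s with hH
  have hK : 0 ≤ K := le_trans (norm_nonneg _) (hVbd 0 (Classical.arbitrary Ω))
  have contF : Continuous F := Real.continuous_exp.comp (continuous_const.inner Wq.continuous)
  have contG : Continuous G := contF.smul Wv.continuous
  have contH : Continuous H := contF.smul continuous_id
  -- inner product bound
  have hinner : ∀ (x : EuclideanSpace ℝ (Fin (d + 1))), ‖x‖ ≤ K → |⟪v, Wq x⟫| ≤ K * K := by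
    intro x hx
    refine le_trans (abs_real_inner_le_norm _ _) ?_
    have h1 : ‖Wq x‖ ≤ K := le_trans (Wq.le_opNorm x)
      (by calc ‖Wq‖ * ‖x‖ ≤ 1 * K := mul_le_mul hWq hx (norm_nonneg _) zero_le_one
           _ = K := one_mul K)
    exact mul_le_mul hv h1 (norm_nonneg _) hK
  have hFbd : ∀ i ω, ‖F (V i ω)‖ ≤ Real.exp (K * K) := by
    intro i ω
    rw [Real.norm_eq_abs, abs_of_pos (Real.exp_pos _)]
    exact Real.exp_le_exp.2 (le_trans (le_abs_self _) (hinner _ (hVbd i ω)))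
  have hGbd : ∀ i ω, ‖G (V i ω)‖ ≤ Real.exp (K * K) * K := by
    intro i ω
    rw [hG]
    simp only [norm_smul, Real.norm_eq_abs, abs_of_pos (Real.exp_pos _)]
    refine mul_le_mul ?_ ?_ (norm_nonneg _) (Real.exp_pos _).le
    · exact Real.exp_le_exp.2 (le_trans (le_abs_self _) (hinner _ (hVbd i ω)))
    · refine le_trans (Wv.le_opNorm _) ?_
      calc ‖Wv‖ * ‖V i ω‖ ≤ 1 * K := mul_le_mul hWv (hVbd i ω) (norm_nonneg _) zero_le_one
        _ = K := one_mul K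
  have hHbd : ∀ i ω, ‖H (V i ω)‖ ≤ Real.exp (K * K) * K := by
    intro i ω
    rw [hH]
    simp only [norm_smul, Real.norm_eq_abs, abs_of_pos (Real.exp_pos _)]
    exact mul_le_mul (Real.exp_le_exp.2 (le_trans (le_abs_self _) (hinner _ (hVbd i ω))))
      (hVbd i ω) (norm_nonneg _) (Real.exp_pos _).le
  -- integrability of compositions with V 0
  have hFVmeas : ∀ i, AEStronglyMeasurable (fun ω => F (V i ω)) μ :=
    fun i => (contF.measurable.comp (hVmeas i)).aestronglyMeasurable
  have hGVmeas : ∀ i, AEStronglyMeasurable (fun ω => G (V i ω)) μ :=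
    fun i => (contG.measurable.comp (hVmeas i)).aestronglyMeasurable
  have hFint : Integrable (fun ω => F (V 0 ω)) μ :=
    ⟨hFVmeas 0, HasFiniteIntegral.of_bounded (C := Real.exp (K * K))
      (Filter.Eventually.of_forall (hFbd 0))⟩
  have hGint : Integrable (fun ω => G (V 0 ω)) μ :=
    ⟨hGVmeas 0, HasFiniteIntegral.of_bounded (C := Real.exp (K * K) * K)
      (Filter.Eventually.of_forall (hGbd 0))⟩
  have hHint : Integrable (fun ω => H (V 0 ω)) μ :=
    ⟨(contH.measurable.comp (hVmeas 0)).aestronglyMeasurable,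
      HasFiniteIntegral.of_bounded (C := Real.exp (K * K) * K)
      (Filter.Eventually.of_forall (hHbd 0))⟩
  -- integrability with respect to P
  have hFintP : Integrable F P := by
    rw [← hVlaw 0]
    exact (integrable_map_measure (by rw [hVlaw 0]; exact contF.aestronglyMeasurable)
      (hVmeas 0).aemeasurable).2 hFint
  have hHintP : Integrable H P := by
    rw [← hVlaw 0]
    exact (integrable_map_measure (by rw [hVlaw 0]; exact contH.aestronglyMeasurable)
      (hVmeas 0).aemeasurable).2 hHint
  -- identities of expectations
  have hFexp : (∫ ω, F (V 0 ω) ∂μ) = ∫ s, F s ∂P := by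
    rw [← hVlaw 0, integral_map (hVmeas 0).aemeasurable
      (by rw [hVlaw 0]; exact contF.aestronglyMeasurable)]
  have hGexp : (∫ ω, G (V 0 ω) ∂μ) = ∫ s, G s ∂P := by
    rw [← hVlaw 0, integral_map (hVmeas 0).aemeasurable
      (by rw [hVlaw 0]; exact contG.aestronglyMeasurable)]
  -- identical distribution and independence of compositions
  have hVident : ∀ i, IdentDistrib (V i) (V 0) μ μ := fun i =>
    ⟨(hVmeas i).aemeasurable, (hVmeas 0).aemeasurable, by rw [hVlaw i, hVlaw 0]⟩
  -- strong law for F ∘ V and G ∘ V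
  have hlawF : ∀ᵐ ω ∂μ, Tendsto
      (fun n : ℕ => (n : ℝ)⁻¹ • ∑ j ∈ Finset.range n, F (V j ω)) atTop
      (nhds (∫ s, F s ∂P)) := by
    have := strong_law_ae (μ := μ) (fun i ω => F (V i ω)) hFint
      (fun i j hij => ((hVindep.indepFun hij).comp contF.measurable contF.measurable))
      (fun i => (hVident i).comp contF.measurable)
    filter_upwards [this] with ω hω
    rwa [hFexp] at hω
  have hlawG : ∀ᵐ ω ∂μ, Tendsto
      (fun n : ℕ => (n : ℝ)⁻¹ • ∑ j ∈ Finset.range n, G (V j ω)) atTop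
      (nhds (∫ s, G s ∂P)) := by
    have := strong_law_ae (μ := μ) (fun i ω => G (V i ω)) hGint
      (fun i j hij => ((hVindep.indepFun hij).comp contG.measurable contG.measurable))
      (fun i => (hVident i).comp contG.measurable)
    filter_upwards [this] with ω hω
    rwa [hGexp] at hω
  -- the denominator limit is positive
  have hFpos : 0 < ∫ s, F s ∂P := by
    rw [integral_pos_iff_support_of_nonneg (fun s => (Real.exp_pos _).le) hFintP]
    have : Function.support F = Set.univ := by
      ext s; simp [hF, Function.support, (Real.exp_pos _).ne']
    rw [this]
    simp
  have hFne : (∫ s, F s ∂P) ≠ 0 := hFpos.ne'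
  -- identify the limit
  have hlim : (∫ s, F s ∂P)⁻¹ • ∫ s, G s ∂P
      = Wv ((∫ s, F s ∂P)⁻¹ • ∫ s, H s ∂P) := by
    rw [Wv.map_smul]
    congr 1
    rw [← ContinuousLinearMap.integral_comp_comm Wv hHintP]
    congr 1
    ext s
    rw [hG, hH, Wv.map_smul]
  -- combine
  filter_upwards [hlawF, hlawG] with ω hf hg
  have htend : Tendsto
      (fun n : ℕ => ((n : ℝ)⁻¹ • ∑ j ∈ Finset.range n, F (V j ω))⁻¹ •
        ((n : ℝ)⁻¹ • ∑ j ∈ Finset.range n, G (V j ω))) atTop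
      (nhds ((∫ s, F s ∂P)⁻¹ • ∫ s, G s ∂P)) :=
    (hf.inv₀ hFne).smul hg
  rw [hlim] at htend
  refine htend.congr' ?_
  filter_upwards [eventually_ge_atTop 1] with n hn
  have hn' : (n : ℝ) ≠ 0 := Nat.cast_ne_zero.2 (by omega)
  rw [smul_smul, smul_eq_mul, mul_inv, inv_inv, mul_right_comm, mul_inv_cancel₀ hn', one_mul]
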